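/- For every integer k ≥ 2, the local antimagic total chromatic number of the star S_k equals 2. -/

import Mathlib

/-!
Local antimagic (total) labelings and chromatic numbers, firecracker graphs,
stars, double stars, joins, and edge-corona products.
-/

open scoped Classical

noncomputable section

namespace LocalAntimagic

variable {V : Type*} [Fintype V]

/-- The weight of a vertex `u` under an edge labeling `f`: the sum of the
labels of the edges incident with `u`. -/
def weight (G : SimpleGraph V) (f : Sym2 V → ℕ) (u : V) : ℕ :=
  ∑ e ∈ G.edgeFinset, if u ∈ e then f e else 0

/-- `f` is a local antimagic labeling of `G`: it maps the edge set of `G`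
bijectively onto `{1, …, |E(G)|}` and adjacent vertices get distinct weights. -/
def IsLocalAntimagic (G : SimpleGraph V) (f : Sym2 V → ℕ) : Prop :=
  Set.BijOn f G.edgeSet (Set.Icc 1 G.edgeFinset.card) ∧
    ∀ u v, G.Adj u v → weight G f u ≠ weight G f v

/-- The number of distinct colors (vertex weights) induced by `f`. -/
def colorCount (G : SimpleGraph V) (f : Sym2 V → ℕ) : ℕ :=
  (Finset.univ.image (weight G f)).card

/-- The local antimagic chromatic number `χ_la(G)`: the least number of
distinct induced colors over all local antimagic labelings of `G`. -/
def chiLA (G : SimpleGraph V) : ℕ :=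
  sInf {c | ∃ f, IsLocalAntimagic G f ∧ colorCount G f = c}

/-- The total weight of a vertex `u` under a total labeling `(gv, ge)`:
`gv u` plus the sum of the labels of the edges incident with `u`. -/
def totalWeight (G : SimpleGraph V) (gv : V → ℕ) (ge : Sym2 V → ℕ) (u : V) : ℕ :=
  gv u + weight G ge u

/-- `(gv, ge)` is a local antimagic total labeling of `G`: together the vertex
labels and edge labels form a bijection from `V(G) ∪ E(G)` onto
`{1, …, |V(G)| + |E(G)|}`, and adjacent vertices get distinct total weights. -/
def IsLocalAntimagicTotal (G : SimpleGraph V) (gv : V → ℕ) (ge : Sym2 V → ℕ) : Prop :=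
  Set.BijOn (Sum.elim gv ge)
    (Set.range Sum.inl ∪ Sum.inr '' G.edgeSet)
    (Set.Icc 1 (Fintype.card V + G.edgeFinset.card)) ∧
    ∀ u v, G.Adj u v → totalWeight G gv ge u ≠ totalWeight G gv ge v

/-- The number of distinct colors (total vertex weights) induced by `(gv, ge)`. -/
def totalColorCount (G : SimpleGraph V) (gv : V → ℕ) (ge : Sym2 V → ℕ) : ℕ :=
  (Finset.univ.image (totalWeight G gv ge)).card

/-- The local antimagic total chromatic number `χ_lat(G)`. -/
def chiLAT (G : SimpleGraph V) : ℕ :=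
  sInf {c | ∃ gv ge, IsLocalAntimagicTotal G gv ge ∧ totalColorCount G gv ge = c}

/-- The star `S_k` with one center (`Sum.inl`) and `k` leaves (`Sum.inr`). -/
def star (k : ℕ) : SimpleGraph (Unit ⊕ Fin k) := completeBipartiteGraph Unit (Fin k)

-- our labels
def gvS (k : ℕ) : Unit ⊕ Fin k → ℕ := Sum.elim (fun _ => 1) (fun i => 2*k+1-i)

def hS (k : ℕ) : Unit ⊕ Fin k → ℕ := Sum.elim (fun _ => 0) (fun i => i+2)

def geS (k : ℕ) : Sym2 (Unit ⊕ Fin k) → ℕ :=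
  Sym2.lift ⟨fun u v => hS k u + hS k v, fun u v => by ring⟩

lemma geS_eval (k : ℕ) (i : Fin k) : geS k s(Sum.inl (), Sum.inr i) = i + 2 := by
  simp [geS, hS]

lemma star_edgeFinset (k : ℕ) :
    (star k).edgeFinset = Finset.univ.image (fun i : Fin k => s(Sum.inl (), Sum.inr i)) := by
  ext e
  induction e with
  | _ u v =>
    rw [SimpleGraph.mem_edgeFinset]
    cases u <;> cases v <;>
      simp [star, SimpleGraph.mem_edgeFinset, Sym2.eq, Sym2.rel_iff', eq_comm]

lemma edge_inj (k : ℕ) : Function.Injective (fun i : Fin k => s(Sum.inl (), Sum.inr i)) := by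
  intro i j h
  simpa [Sym2.eq, Sym2.rel_iff'] using h

lemma star_edgeFinset_card (k : ℕ) : (star k).edgeFinset.card = k := by
  rw [star_edgeFinset, Finset.card_image_of_injective _ (edge_inj k)]
  simp

lemma weight_eq (k : ℕ) (f : Sym2 (Unit ⊕ Fin k) → ℕ) (u : Unit ⊕ Fin k) :
    weight (star k) f u = ∑ i : Fin k, if u ∈ s(Sum.inl (), Sum.inr i) then f s(Sum.inl (), Sum.inr i) else 0 := by
  rw [weight, star_edgeFinset, Finset.sum_image (fun i _ j _ h => edge_inj k h)]
  exact Finset.sum_congr rfl fun i _ => by simp [Sym2.mem_iff]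


lemma weight_center (k : ℕ) (f : Sym2 (Unit ⊕ Fin k) → ℕ) :
    weight (star k) f (Sum.inl ()) = ∑ i : Fin k, f s(Sum.inl (), Sum.inr i) := by
  rw [weight_eq]; simp

lemma weight_leaf (k : ℕ) (f : Sym2 (Unit ⊕ Fin k) → ℕ) (j : Fin k) :
    weight (star k) f (Sum.inr j) = f s(Sum.inl (), Sum.inr j) := by
  rw [weight_eq]
  rw [Finset.sum_eq_single j]
  · simp
  · intro i _ hij
    have hji : ¬ (j = i) := fun h => hij h.symm
    have hmem : ¬ ((Sum.inr j : Unit ⊕ Fin k) ∈ s(Sum.inl (), Sum.inr i)) := by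
      simp [Sym2.mem_iff, hji]
    simp [hmem]
  · simp

lemma totalWeight_leaf (k : ℕ) (j : Fin k) :
    totalWeight (star k) (gvS k) (geS k) (Sum.inr j) = 2*k+3 := by
  have hj : (j : ℕ) < k := j.isLt
  rw [totalWeight, weight_leaf, geS_eval, gvS]
  simp only [Sum.elim_inr]
  omega

lemma totalWeight_center (k : ℕ) :
    totalWeight (star k) (gvS k) (geS k) (Sum.inl ()) = 1 + ∑ i : Fin k, ((i:ℕ) + 2) := by
  rw [totalWeight, weight_center, gvS]
  simp [geS_eval]

lemma sum_formula (k : ℕ) : 2 * ∑ i : Fin k, ((i:ℕ) + 2) = k * k + 3 * k := by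
  rw [Finset.mul_sum]
  rw [Fin.sum_univ_eq_sum_range (fun i => 2*(i+2))]
  induction k with
  | zero => simp
  | succ n ih => rw [Finset.sum_range_succ, ih]; ring

lemma center_ne_leaf (k : ℕ) (hk : 2 ≤ k) :
    totalWeight (star k) (gvS k) (geS k) (Sum.inl ()) ≠ 2*k+3 := by
  rw [totalWeight_center]
  intro h
  have h2 := sum_formula k
  have h3 : 2*k ≤ k*k := Nat.mul_le_mul_right k hk
  have h4 : k ≤ 4 := by omega
  interval_cases k <;> omega


lemma mem_edgeSet_iff (k : ℕ) (e : Sym2 (Unit ⊕ Fin k)) :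
    e ∈ (star k).edgeSet ↔ ∃ i : Fin k, e = s(Sum.inl (), Sum.inr i) := by
  rw [← SimpleGraph.mem_edgeFinset, star_edgeFinset]
  simp [eq_comm]

lemma star_bijOn (k : ℕ) :
    Set.BijOn (Sum.elim (gvS k) (geS k))
      (Set.range Sum.inl ∪ Sum.inr '' (star k).edgeSet)
      (Set.Icc 1 (Fintype.card (Unit ⊕ Fin k) + (star k).edgeFinset.card)) := by
  have hcard : Fintype.card (Unit ⊕ Fin k) + (star k).edgeFinset.card = 2*k+1 := by
    rw [star_edgeFinset_card]; simp; omega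
  rw [hcard]
  refine ⟨?_, ?_, ?_⟩
  · rintro x (⟨v, rfl⟩ | ⟨e, he, rfl⟩)
    · cases v with
      | inl u => simp [gvS]
      | inr i => have := i.isLt; simp [gvS]; omega
    · obtain ⟨i, rfl⟩ := (mem_edgeSet_iff k e).1 he
      have := i.isLt
      simp [geS_eval]; omega
  · rintro x (⟨v, rfl⟩ | ⟨e, he, rfl⟩) y (⟨w, rfl⟩ | ⟨e', he', rfl⟩) hxy
    · cases v with
      | inl u =>
        cases w with
        | inl u' => cases u; cases u'; rfl
        | inr j => have := j.isLt; simp [gvS] at hxy; omega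
      | inr i =>
        cases w with
        | inl u' => have := i.isLt; simp [gvS] at hxy; omega
        | inr j =>
          have hi := i.isLt; have hj := j.isLt
          simp only [Sum.elim_inl, gvS, Sum.elim_inr] at hxy
          have : (i : ℕ) = j := by omega
          simp [Fin.ext_iff, this]
    · obtain ⟨j, rfl⟩ := (mem_edgeSet_iff k e').1 he'
      have hj := j.isLt
      cases v with
      | inl u => simp [gvS, geS_eval] at hxy
      | inr i => have hi := i.isLt; simp [gvS, geS_eval] at hxy; omega
    · obtain ⟨i, rfl⟩ := (mem_edgeSet_iff k e).1 he
      have hi := i.isLt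
      cases w with
      | inl u => simp [gvS, geS_eval] at hxy
      | inr j => have hj := j.isLt; simp [gvS, geS_eval] at hxy; omega
    · obtain ⟨i, rfl⟩ := (mem_edgeSet_iff k e).1 he
      obtain ⟨j, rfl⟩ := (mem_edgeSet_iff k e').1 he'
      simp only [Sum.elim_inr, geS_eval] at hxy
      have : i = j := by ext; omega
      simp [this]
  · rintro m ⟨h1, h2⟩
    by_cases hm1 : m = 1
    · exact ⟨Sum.inl (Sum.inl ()), Or.inl ⟨_, rfl⟩, by simp [gvS, hm1]⟩
    by_cases hm2 : m ≤ k+1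
    · refine ⟨Sum.inr s(Sum.inl (), Sum.inr ⟨m-2, by omega⟩),
        Or.inr ⟨_, (mem_edgeSet_iff k _).2 ⟨_, rfl⟩, rfl⟩, ?_⟩
      simp [geS_eval]; omega
    · refine ⟨Sum.inl (Sum.inr ⟨2*k+1-m, by omega⟩), Or.inl ⟨_, rfl⟩, ?_⟩
      simp [gvS]; omega

lemma star_isLAT (k : ℕ) (hk : 2 ≤ k) : IsLocalAntimagicTotal (star k) (gvS k) (geS k) := by
  refine ⟨star_bijOn k, ?_⟩
  intro u v huv
  cases u with
  | inl u =>
    cases v with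
    | inl v => simp [star] at huv
    | inr j => cases u; rw [totalWeight_leaf]; exact center_ne_leaf k hk
  | inr i =>
    cases v with
    | inl v => cases v; rw [totalWeight_leaf]; exact (center_ne_leaf k hk).symm
    | inr j => simp [star] at huv

lemma star_tcc (k : ℕ) (hk : 2 ≤ k) : totalColorCount (star k) (gvS k) (geS k) = 2 := by
  have himg : Finset.univ.image (totalWeight (star k) (gvS k) (geS k)) =
      {totalWeight (star k) (gvS k) (geS k) (Sum.inl ()), 2*k+3} := by
    apply Finset.Subset.antisymm
    · intro c hc
      simp only [Finset.mem_image, Finset.mem_univ, true_and] at hc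
      obtain ⟨u, rfl⟩ := hc
      cases u with
      | inl u => cases u; simp
      | inr j => simp [totalWeight_leaf]
    · intro c hc
      simp only [Finset.mem_insert, Finset.mem_singleton] at hc
      rcases hc with rfl | rfl
      · exact Finset.mem_image_of_mem _ (Finset.mem_univ _)
      · rw [← totalWeight_leaf k (⟨0, by omega⟩ : Fin k)]
        exact Finset.mem_image_of_mem _ (Finset.mem_univ _)
  rw [totalColorCount, himg,
    Finset.card_insert_of_notMem (by simp [center_ne_leaf k hk]), Finset.card_singleton]

lemma star_two_le (k : ℕ) (hk : 2 ≤ k) (gv : Unit ⊕ Fin k → ℕ)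
    (ge : Sym2 (Unit ⊕ Fin k) → ℕ) (h : IsLocalAntimagicTotal (star k) gv ge) :
    2 ≤ totalColorCount (star k) gv ge := by
  have hadj : (star k).Adj (Sum.inl ()) (Sum.inr (⟨0, by omega⟩ : Fin k)) := by simp [star]
  have hne := h.2 _ _ hadj
  refine Finset.one_lt_card.mpr ⟨_, Finset.mem_image_of_mem _ (Finset.mem_univ (Sum.inl ())),
    _, Finset.mem_image_of_mem _ (Finset.mem_univ (Sum.inr (⟨0, by omega⟩ : Fin k))), hne⟩

/-- For every integer `k ≥ 2`, the local antimagic total chromatic number of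
the star `S_k` equals 2. -/
theorem chiLAT_star {k : ℕ} (hk : 2 ≤ k) : chiLAT (star k) = 2 := by
  apply le_antisymm
  · exact Nat.sInf_le ⟨gvS k, geS k, star_isLAT k hk, star_tcc k hk⟩
  · refine le_csInf ⟨2, ⟨gvS k, geS k, star_isLAT k hk, star_tcc k hk⟩⟩ ?_
    rintro c ⟨gv, ge, h, rfl⟩
    exact star_two_le k hk gv ge h


end LocalAntimagic
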